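/- arXiv:2405.11171 — 4 statements merged into one kernel-verified Lean document; each statement's English description precedes it below -/
import Mathlib

section
/- If G is a finite claw-free graph, then the domination number equals the independent domination number: γ(G) = i(G). -/
/-- In a finite claw-free graph, the domination number equals the independent
domination number: `γ(G) = i(G)`. -/
theorem clawfree_domination_eq_independent_domination {V : Type*} [Fintype V]
    (G : SimpleGraph V)
    (hclaw : ∀ a b c d : V, G.Adj a b → G.Adj a c → G.Adj a d →
      ¬ G.Adj b c → ¬ G.Adj b d → ¬ G.Adj c d → b = c ∨ b = d ∨ c = d) :
    sInf {n : ℕ | ∃ S : Finset V,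
        (∀ v : V, v ∉ S → ∃ u ∈ S, G.Adj u v) ∧ S.card = n} =
    sInf {n : ℕ | ∃ S : Finset V,
        (∀ v : V, v ∉ S → ∃ u ∈ S, G.Adj u v) ∧
        (↑S : Set V).Pairwise (fun a b => ¬ G.Adj a b) ∧ S.card = n} := by
  classical
  set A : Set ℕ := {n : ℕ | ∃ S : Finset V,
      (∀ v : V, v ∉ S → ∃ u ∈ S, G.Adj u v) ∧ S.card = n} with hA
  set I : Set ℕ := {n : ℕ | ∃ S : Finset V,
      (∀ v : V, v ∉ S → ∃ u ∈ S, G.Adj u v) ∧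
      (↑S : Set V).Pairwise (fun a b => ¬ G.Adj a b) ∧ S.card = n} with hI
  have hAne : A.Nonempty :=
    ⟨Fintype.card V, Finset.univ, fun v hv => absurd (Finset.mem_univ v) hv,
      Finset.card_univ⟩
  set γ := sInf A with hγ
  obtain ⟨D0, hD0dom, hD0card⟩ : γ ∈ A := Nat.sInf_mem hAne
  set E : Finset V → ℕ := fun S => ((S ×ˢ S).filter (fun p => G.Adj p.1 p.2)).card
    with hE
  set B : Set ℕ := {m : ℕ | ∃ S : Finset V,
      (∀ v : V, v ∉ S → ∃ u ∈ S, G.Adj u v) ∧ S.card = γ ∧ E S = m} with hB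
  have hBne : B.Nonempty := ⟨E D0, D0, hD0dom, hD0card, rfl⟩
  obtain ⟨D, hDdom, hDcard, hDE⟩ : sInf B ∈ B := Nat.sInf_mem hBne
  -- D is independent
  have hindep : (↑D : Set V).Pairwise (fun a b => ¬ G.Adj a b) := by
    intro x hx y hy hne
    by_contra hadj
    have hxD : x ∈ D := hx
    have hyD : y ∈ D := hy
    -- case on whether D.erase x dominates
    by_cases hpriv : ∀ v, v ∉ D.erase x → ∃ u ∈ D.erase x, G.Adj u v
    · have h1 : γ ≤ (D.erase x).card := Nat.sInf_le ⟨D.erase x, hpriv, rfl⟩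
      rw [Finset.card_erase_of_mem hxD, hDcard] at h1
      have h2 : 0 < γ := hDcard ▸ Finset.card_pos.mpr ⟨x, hxD⟩
      omega
    · push_neg at hpriv
      obtain ⟨w, hwe, hwpriv⟩ := hpriv
      have hwx : w ≠ x := by
        rintro rfl
        exact hwpriv y (Finset.mem_erase.mpr ⟨(G.ne_of_adj hadj).symm, hyD⟩)
          hadj.symm
      have hwD : w ∉ D := fun h => hwe (Finset.mem_erase.mpr ⟨hwx, h⟩)
      have hxw : G.Adj x w := by
        obtain ⟨u, huD, hu⟩ := hDdom w hwD
        rcases eq_or_ne u x with rfl | hux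
        · exact hu
        · exact absurd hu (hwpriv u (Finset.mem_erase.mpr ⟨hux, huD⟩))
      set D' := insert w (D.erase x) with hD'
      have hwe' : w ∉ D.erase x := hwe
      have hyD' : y ∈ D' := Finset.mem_insert_of_mem
        (Finset.mem_erase.mpr ⟨(G.ne_of_adj hadj).symm, hyD⟩)
      -- D' dominates
      have hD'dom : ∀ v : V, v ∉ D' → ∃ u ∈ D', G.Adj u v := by
        intro v hv
        rcases eq_or_ne v x with rfl | hvx
        · exact ⟨y, hyD', hadj.symm⟩
        · have hvD : v ∉ D := by
            intro h
            exact hv (Finset.mem_insert_of_mem (Finset.mem_erase.mpr ⟨hvx, h⟩))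
          have hvw : v ≠ w := fun h => hv (h ▸ Finset.mem_insert_self _ _)
          by_cases hcase : ∃ u ∈ D.erase x, G.Adj u v
          · obtain ⟨u, hu, huv⟩ := hcase
            exact ⟨u, Finset.mem_insert_of_mem hu, huv⟩
          · push_neg at hcase
            -- v must be adjacent to x
            have hxv : G.Adj x v := by
              obtain ⟨u, huD, hu⟩ := hDdom v hvD
              rcases eq_or_ne u x with rfl | hux
              · exact hu
              · exact absurd hu (hcase u (Finset.mem_erase.mpr ⟨hux, huD⟩))
            by_cases hwv : G.Adj w v
            · exact ⟨w, Finset.mem_insert_self _ _, hwv⟩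
            · -- claw at x with y, w, v
              have hyw : ¬ G.Adj y w := hwpriv y
                (Finset.mem_erase.mpr ⟨(G.ne_of_adj hadj).symm, hyD⟩)
              have hyv : ¬ G.Adj y v := hcase y
                (Finset.mem_erase.mpr ⟨(G.ne_of_adj hadj).symm, hyD⟩)
              rcases hclaw x y w v hadj hxw hxv hyw hyv hwv with h | h | h
              · exact absurd (h ▸ hyD) hwD
              · exact absurd (h ▸ hyD) hvD
              · exact absurd h.symm hvw
      -- card D' = γ
      have h2 : 0 < γ := hDcard ▸ Finset.card_pos.mpr ⟨x, hxD⟩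
      have hD'card : D'.card = γ := by
        rw [hD', Finset.card_insert_of_notMem hwe',
          Finset.card_erase_of_mem hxD, hDcard]
        omega
      -- E D' ≤ E (D.erase x)
      have hEle : E D' ≤ E (D.erase x) := by
        apply Finset.card_le_card
        rintro ⟨a, b⟩ hp
        simp only [Finset.mem_filter, Finset.mem_product] at hp ⊢
        obtain ⟨⟨hp1, hp2⟩, hpadj⟩ := hp
        rw [hD', Finset.mem_insert] at hp1 hp2
        rcases hp1 with rfl | hp1
        · rcases hp2 with rfl | hp2
          · exact absurd hpadj (G.loopless.irrefl _)
          · exact absurd hpadj.symm (hwpriv b hp2)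
        · rcases hp2 with rfl | hp2
          · exact absurd hpadj (hwpriv a hp1)
          · exact ⟨⟨hp1, hp2⟩, hpadj⟩
      -- E (D.erase x) < E D
      have hElt : E (D.erase x) < E D := by
        apply Finset.card_lt_card
        constructor
        · intro p hp
          simp only [Finset.mem_filter, Finset.mem_product, Finset.mem_erase]
            at hp ⊢
          exact ⟨⟨hp.1.1.2, hp.1.2.2⟩, hp.2⟩
        · intro hsub
          have hxy : (x, y) ∈ (D ×ˢ D).filter (fun p => G.Adj p.1 p.2) := by
            simp only [Finset.mem_filter, Finset.mem_product]
            exact ⟨⟨hxD, hyD⟩, hadj⟩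
          have := hsub hxy
          simp only [Finset.mem_filter, Finset.mem_product, Finset.mem_erase]
            at this
          exact this.1.1.1 rfl
      have : sInf B ≤ E D' := Nat.sInf_le ⟨D', hD'dom, hD'card, rfl⟩
      omega
  -- conclude
  have hIne : I.Nonempty := ⟨γ, D, hDdom, hindep, hDcard⟩
  have h1 : sInf I ≤ γ := Nat.sInf_le ⟨D, hDdom, hindep, hDcard⟩
  have h2 : γ ≤ sInf I := by
    obtain ⟨S, hS1, _, hS3⟩ : sInf I ∈ I := Nat.sInf_mem hIne
    exact Nat.sInf_le ⟨S, hS1, hS3⟩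
  omega
end

section
/- If G is a finite nonempty claw-free graph, then α(G) ≤ 2·i(G), i.e., the independence number is at most twice the independent domination number. -/
/-- In a finite nonempty claw-free graph, the independence number is at most twice the
independent domination number: `α(G) ≤ 2 · i(G)`. -/
theorem clawfree_indepNum_le_two_mul_indDomNum {V : Type*} [Fintype V] [Nonempty V]
    (G : SimpleGraph V)
    (hclaw : ∀ a b c d : V, G.Adj a b → G.Adj a c → G.Adj a d →
      ¬ G.Adj b c → ¬ G.Adj b d → ¬ G.Adj c d → b = c ∨ b = d ∨ c = d) :
    sSup {n : ℕ | ∃ S : Finset V,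
        (↑S : Set V).Pairwise (fun a b => ¬ G.Adj a b) ∧ S.card = n} ≤
    2 * sInf {n : ℕ | ∃ S : Finset V,
        (∀ v : V, v ∉ S → ∃ u ∈ S, G.Adj u v) ∧
        (↑S : Set V).Pairwise (fun a b => ¬ G.Adj a b) ∧ S.card = n} := by
  classical
  set Isets : Set ℕ := {n : ℕ | ∃ S : Finset V,
      (↑S : Set V).Pairwise (fun a b => ¬ G.Adj a b) ∧ S.card = n} with hIsets
  set Dsets : Set ℕ := {n : ℕ | ∃ S : Finset V,
      (∀ v : V, v ∉ S → ∃ u ∈ S, G.Adj u v) ∧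
      (↑S : Set V).Pairwise (fun a b => ¬ G.Adj a b) ∧ S.card = n} with hDsets
  -- Key counting lemma
  have key : ∀ (S D : Finset V),
      (↑S : Set V).Pairwise (fun a b => ¬ G.Adj a b) →
      (∀ v : V, v ∉ D → ∃ u ∈ D, G.Adj u v) →
      S.card ≤ 2 * D.card := by
    intro S D hS hdom
    set f : V → V := fun a =>
      if a ∈ D then a else
        if h2 : ∃ u, u ∈ D ∧ G.Adj u a then h2.choose else a with hf
    have hmaps : ∀ a ∈ S, f a ∈ D := by
      intro a _
      by_cases hD : a ∈ D
      · simp [hf, hD]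
      · obtain ⟨u, hu, hadj⟩ := hdom a hD
        have h2 : ∃ u, u ∈ D ∧ G.Adj u a := ⟨u, hu, hadj⟩
        simp only [hf, hD, if_false, dif_pos h2]
        exact h2.choose_spec.1
    have hprop : ∀ a ∈ S, f a = a ∨ G.Adj (f a) a := by
      intro a _
      by_cases hD : a ∈ D
      · left; simp [hf, hD]
      · obtain ⟨u, hu, hadj⟩ := hdom a hD
        have h2 : ∃ u, u ∈ D ∧ G.Adj u a := ⟨u, hu, hadj⟩
        right
        simp only [hf, hD, if_false, dif_pos h2]
        exact h2.choose_spec.2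
    refine Finset.card_le_mul_card_image_of_maps_to hmaps 2 ?_
    intro d _
    by_contra hc
    push_neg at hc
    rw [Finset.two_lt_card_iff] at hc
    obtain ⟨a, b, c, ha, hb, hcm, hab, hac, hbc⟩ := hc
    rw [Finset.mem_filter] at ha hb hcm
    obtain ⟨haS, hfa⟩ := ha
    obtain ⟨hbS, hfb⟩ := hb
    obtain ⟨hcS, hfc⟩ := hcm
    -- each of a, b, c is either d or adjacent to d
    have hx : ∀ x ∈ S, f x = d → x = d ∨ G.Adj d x := by
      intro x hxS hxd
      rcases hprop x hxS with h | h
      · left; rw [← hxd, h]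
      · right; rw [← hxd]; exact h
    -- none of them can equal d
    have hne : ∀ x y, x ∈ S → y ∈ S → x ≠ y → f x = d → f y = d → x ≠ d := by
      intro x y hxS hyS hxy hfx hfy hxd
      rcases hx y hyS hfy with h | h
      · exact hxy (hxd.trans h.symm)
      · rw [← hxd] at h
        exact hS hxS hyS hxy h
    have hadja : G.Adj d a := by
      rcases hx a haS hfa with h | h
      · exact absurd h (hne a b haS hbS hab hfa hfb)
      · exact h
    have hadjb : G.Adj d b := by
      rcases hx b hbS hfb with h | h
      · exact absurd h (hne b a hbS haS (Ne.symm hab) hfb hfa)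
      · exact h
    have hadjc : G.Adj d c := by
      rcases hx c hcS hfc with h | h
      · exact absurd h (hne c a hcS haS (Ne.symm hac) hfc hfa)
      · exact h
    rcases hclaw d a b c hadja hadjb hadjc (hS haS hbS hab) (hS haS hcS hac)
        (hS hbS hcS hbc) with h | h | h
    · exact hab h
    · exact hac h
    · exact hbc h
  -- Isets is nonempty and bounded above
  have hIne : Isets.Nonempty := ⟨0, ∅, by simp⟩
  have hIbdd : BddAbove Isets := by
    refine ⟨Fintype.card V, ?_⟩
    rintro n ⟨S, _, rfl⟩
    exact Finset.card_le_univ S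
  -- a maximum independent set is dominating
  have hSup := Nat.sSup_mem hIne hIbdd
  obtain ⟨S0, hS0ind, hS0card⟩ := hSup
  have hS0dom : ∀ v : V, v ∉ S0 → ∃ u ∈ S0, G.Adj u v := by
    intro v hv
    by_contra h
    push_neg at h
    have hins : ((↑(insert v S0) : Set V)).Pairwise (fun a b => ¬ G.Adj a b) := by
      rw [Finset.coe_insert]
      have hsymm : Symmetric (fun a b : V => ¬ G.Adj a b) :=
        fun a b hab adj => hab adj.symm
      haveI : Std.Symm (fun a b : V => ¬ G.Adj a b) := ⟨fun a b h => hsymm h⟩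
      refine (Set.pairwise_insert_of_symm).mpr ⟨hS0ind, ?_⟩
      intro b hb hvb
      intro adj
      exact h b hb adj.symm
    have hmem : (insert v S0).card ∈ Isets := ⟨insert v S0, hins, rfl⟩
    have : (insert v S0).card ≤ sSup Isets := le_csSup hIbdd hmem
    rw [Finset.card_insert_of_notMem hv, hS0card] at this
    omega
  have hDne : Dsets.Nonempty := ⟨S0.card, S0, hS0dom, hS0ind, rfl⟩
  obtain ⟨D, hDdom, hDind, hDcard⟩ := Nat.sInf_mem hDne
  refine csSup_le hIne ?_
  rintro n ⟨S, hSind, rfl⟩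
  calc S.card ≤ 2 * D.card := key S D hSind hDdom
    _ = 2 * sInf Dsets := by rw [hDcard]
end

section
/- For the similarity graph G built on a finite nonempty vertex set, the domination number equals the independent domination number and is at least half of the independence number: γ(G) = i(G) ≥ α(G)/2. -/
open Finset

theorem sim_three {V : Type*} (μ : V → ℝ) (ε : ℝ) (hε : 0 < ε) (G : SimpleGraph V)
    (hG : ∀ i j : V, G.Adj i j ↔ i ≠ j ∧ |μ i - μ j| < ε)
    {d a b c : V} (hab : a ≠ b) (hac : a ≠ c) (hbc : b ≠ c)
    (nab : ¬ G.Adj a b) (nac : ¬ G.Adj a c) (nbc : ¬ G.Adj b c)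
    (ha : a = d ∨ G.Adj d a) (hb : b = d ∨ G.Adj d b) (hc : c = d ∨ G.Adj d c) :
    False := by
  have close : ∀ x : V, x = d ∨ G.Adj d x → |μ x - μ d| < ε := by
    intro x hx
    rcases hx with rfl | hx
    · simpa using hε
    · rw [hG] at hx; rw [abs_sub_comm]; exact hx.2
  have far : ∀ x y : V, x ≠ y → ¬ G.Adj x y → ε ≤ |μ x - μ y| := by
    intro x y hxy hnadj
    by_contra h
    exact hnadj ((hG x y).mpr ⟨hxy, lt_of_not_ge h⟩)
  have g1 := close a ha
  have g2 := close b hb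
  have g3 := close c hc
  have h1 := far a b hab nab
  have h2 := far a c hac nac
  have h3 := far b c hbc nbc
  rw [abs_sub_lt_iff] at g1 g2 g3
  rw [le_abs] at h1 h2 h3
  rcases h1 with h1|h1 <;> rcases h2 with h2|h2 <;> rcases h3 with h3|h3 <;>
    linarith [g1.1, g1.2, g2.1, g2.2, g3.1, g3.2]

theorem sim_exists_T {V : Type*} [Fintype V] (μ : V → ℝ) (ε : ℝ) (hε : 0 < ε)
    (G : SimpleGraph V)
    (hG : ∀ i j : V, G.Adj i j ↔ i ≠ j ∧ |μ i - μ j| < ε)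
    (S : Finset V) (hS : ∀ v : V, v ∉ S → ∃ u ∈ S, G.Adj u v) :
    ∃ T : Finset V, (∀ v : V, v ∉ T → ∃ u ∈ T, G.Adj u v) ∧
      (↑T : Set V).Pairwise (fun a b => ¬ G.Adj a b) ∧ T.card ≤ S.card := by
  classical
  set Indep : Finset V → Prop := fun t => (↑t : Set V).Pairwise (fun a b => ¬ G.Adj a b)
    with hIndep
  -- maximal (by cardinality) independent subset I of S
  obtain ⟨I, hImem, hImax⟩ := (S.powerset.filter Indep).exists_max_image card
    ⟨∅, by simp [hIndep]⟩
  rw [mem_filter, mem_powerset] at hImem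
  obtain ⟨hIS, hIind⟩ := hImem
  -- maximal independent set T containing I
  obtain ⟨T, hTmem, hTmax⟩ :=
    ((univ : Finset V).powerset.filter (fun t => Indep t ∧ I ⊆ t)).exists_max_image card
      ⟨I, by simp [hIind]⟩
  rw [mem_filter] at hTmem
  obtain ⟨-, hTind, hIT⟩ := hTmem
  -- T is dominating
  have hTdom : ∀ v : V, v ∉ T → ∃ u ∈ T, G.Adj u v := by
    intro v hv
    by_contra hcon
    push_neg at hcon
    have hins : Indep (insert v T) ∧ I ⊆ insert v T := by
      refine ⟨?_, hIT.trans (subset_insert _ _)⟩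
      show ((insert v T : Finset V) : Set V).Pairwise fun a b => ¬ G.Adj a b
      rw [coe_insert]
      refine (haveI : Std.Symm (fun a b : V => ¬ G.Adj a b) := ⟨fun a b h h2 => h (G.adj_symm h2)⟩; Set.pairwise_insert_of_symm) |>.mpr
        ⟨hTind, ?_⟩
      intro b hb _ hadj
      exact hcon b (by exact_mod_cast hb) (G.adj_symm hadj)
    have := hTmax (insert v T) (by rw [mem_filter]; exact ⟨mem_powerset.mpr (subset_univ _), hins⟩)
    rw [card_insert_of_notMem hv] at this
    omega
  refine ⟨T, hTdom, hTind, ?_⟩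
  -- vertices of T \ I are not in S
  have hTnotS : ∀ t ∈ T \ I, t ∉ S := by
    intro t ht htS
    rw [mem_sdiff] at ht
    have hins : Indep (insert t I) := by
      show ((insert t I : Finset V) : Set V).Pairwise fun a b => ¬ G.Adj a b
      rw [coe_insert]
      refine (haveI : Std.Symm (fun a b : V => ¬ G.Adj a b) := ⟨fun a b h h2 => h (G.adj_symm h2)⟩; Set.pairwise_insert_of_symm) |>.mpr
        ⟨hIind, ?_⟩
      intro b hb hne
      exact hTind (by exact_mod_cast ht.1) (by exact_mod_cast hIT (by exact_mod_cast hb)) hne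
    have := hImax (insert t I) (by
      rw [mem_filter, mem_powerset]
      exact ⟨insert_subset htS hIS, hins⟩)
    rw [card_insert_of_notMem ht.2] at this
    omega
  -- choose dominators
  have hgex : ∀ t ∈ T \ I, ∃ u, u ∈ S ∧ G.Adj u t := by
    intro t ht
    obtain ⟨u, hu, hadj⟩ := hS t (hTnotS t ht)
    exact ⟨u, hu, hadj⟩
  set g : V → V := fun t => if h : ∃ u, u ∈ S ∧ G.Adj u t then h.choose else t with hg
  have hgspec : ∀ t ∈ T \ I, g t ∈ S ∧ G.Adj (g t) t := by
    intro t ht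
    have h := hgex t ht
    rw [hg]; simp only [dif_pos h]
    exact h.choose_spec
  have hgSI : ∀ t ∈ T \ I, g t ∈ S \ I := by
    intro t ht
    obtain ⟨hgs, hadj⟩ := hgspec t ht
    rw [mem_sdiff]
    refine ⟨hgs, fun hgi => ?_⟩
    rw [mem_sdiff] at ht
    exact hTind (by exact_mod_cast hIT hgi) (by exact_mod_cast ht.1) hadj.ne hadj
  have hinj : Set.InjOn g (T \ I : Finset V) := by
    intro t ht t' ht' heq
    by_contra hne
    rw [mem_coe] at ht ht'
    set u := g t with hu
    have h1 := hgspec t ht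
    have h2 := hgspec t' ht'
    have huSI := hgSI t ht
    rw [mem_sdiff] at huSI
    -- u is adjacent to some x ∈ I
    have hxex : ∃ x ∈ I, G.Adj u x := by
      by_contra hcon
      push_neg at hcon
      have hins : Indep (insert u I) := by
        show ((insert u I : Finset V) : Set V).Pairwise fun a b => ¬ G.Adj a b
        rw [coe_insert]
        refine (haveI : Std.Symm (fun a b : V => ¬ G.Adj a b) := ⟨fun a b h h2 => h (G.adj_symm h2)⟩; Set.pairwise_insert_of_symm) |>.mpr
          ⟨hIind, ?_⟩
        intro b hb hne2 hadj
        exact hcon b (by exact_mod_cast hb) hadj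
      have := hImax (insert u I) (by
        rw [mem_filter, mem_powerset]
        exact ⟨insert_subset huSI.1 hIS, hins⟩)
      rw [card_insert_of_notMem huSI.2] at this
      omega
    obtain ⟨x, hxI, hux⟩ := hxex
    rw [mem_sdiff] at ht ht'
    have hxt : t ≠ x := fun h => ht.2 (h ▸ hxI)
    have hxt' : t' ≠ x := fun h => ht'.2 (h ▸ hxI)
    have n1 : ¬ G.Adj t t' := hTind (by exact_mod_cast ht.1) (by exact_mod_cast ht'.1) hne
    have n2 : ¬ G.Adj t x := hTind (by exact_mod_cast ht.1) (by exact_mod_cast hIT hxI) hxt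
    have n3 : ¬ G.Adj t' x := hTind (by exact_mod_cast ht'.1) (by exact_mod_cast hIT hxI) hxt'
    have hb2 : G.Adj u t' := by rw [heq]; exact h2.2
    exact sim_three μ ε hε G hG hne hxt hxt' n1 n2 n3
      (Or.inr h1.2) (Or.inr hb2) (Or.inr hux)
  calc T.card = (T \ I).card + I.card := (card_sdiff_add_card_eq_card hIT).symm
    _ ≤ (S \ I).card + I.card := by
        gcongr ?_ + _
        exact card_le_card_of_injOn g hgSI hinj
    _ = S.card := card_sdiff_add_card_eq_card hIS

/-- For the similarity graph on a finite nonempty vertex set, the domination number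
equals the independent domination number and is at least half of the independence
number: `γ(G) = i(G) ≥ α(G)/2`. -/
theorem similarity_graph_domination_numbers {V : Type*} [Fintype V] [Nonempty V]
    (μ : V → ℝ) (ε : ℝ) (hε : 0 < ε) (G : SimpleGraph V)
    (hG : ∀ i j : V, G.Adj i j ↔ i ≠ j ∧ |μ i - μ j| < ε) :
    sInf {n : ℕ | ∃ S : Finset V,
        (∀ v : V, v ∉ S → ∃ u ∈ S, G.Adj u v) ∧ S.card = n} =
      sInf {n : ℕ | ∃ S : Finset V,
        (∀ v : V, v ∉ S → ∃ u ∈ S, G.Adj u v) ∧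
        (↑S : Set V).Pairwise (fun a b => ¬ G.Adj a b) ∧ S.card = n} ∧
    sSup {n : ℕ | ∃ S : Finset V,
        (↑S : Set V).Pairwise (fun a b => ¬ G.Adj a b) ∧ S.card = n} ≤
      2 * sInf {n : ℕ | ∃ S : Finset V,
        (∀ v : V, v ∉ S → ∃ u ∈ S, G.Adj u v) ∧ S.card = n} := by
  classical
  set A : Set ℕ := {n : ℕ | ∃ S : Finset V,
      (∀ v : V, v ∉ S → ∃ u ∈ S, G.Adj u v) ∧ S.card = n} with hA
  have hAne : A.Nonempty :=
    ⟨(univ : Finset V).card, univ, fun v hv => absurd (mem_univ v) hv, rfl⟩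
  obtain ⟨S, hSdom, hScard⟩ := Nat.sInf_mem hAne
  obtain ⟨T, hTdom, hTind, hTcard⟩ := sim_exists_T μ ε hε G hG S hSdom
  constructor
  · apply le_antisymm
    · -- sInf A ≤ sInf B : sInf B is realized by a set that is in particular dominating
      have hBne : Set.Nonempty {n : ℕ | ∃ S : Finset V,
          (∀ v : V, v ∉ S → ∃ u ∈ S, G.Adj u v) ∧
          (↑S : Set V).Pairwise (fun a b => ¬ G.Adj a b) ∧ S.card = n} :=
        ⟨T.card, T, hTdom, hTind, rfl⟩
      obtain ⟨B, hBdom, _, hBcard⟩ := Nat.sInf_mem hBne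
      exact Nat.sInf_le ⟨B, hBdom, hBcard⟩
    · calc sInf {n : ℕ | ∃ S : Finset V,
            (∀ v : V, v ∉ S → ∃ u ∈ S, G.Adj u v) ∧
            (↑S : Set V).Pairwise (fun a b => ¬ G.Adj a b) ∧ S.card = n}
          ≤ T.card := Nat.sInf_le ⟨T, hTdom, hTind, rfl⟩
        _ ≤ S.card := hTcard
        _ = sInf A := hScard
  · refine csSup_le ⟨0, ⟨∅, by simp, by simp⟩⟩ ?_
    rintro n ⟨P, hPind, hPcard⟩
    -- map each vertex of the independent set P to a dominator in S
    set f : V → V := fun a => if a ∈ S then a else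
      (if h : ∃ u ∈ S, G.Adj u a then h.choose else a) with hf
    have hfspec : ∀ a : V, f a ∈ S ∧ (a = f a ∨ G.Adj (f a) a) := by
      intro a
      by_cases haS : a ∈ S
      · rw [hf]; simp [haS]
      · have h : ∃ u ∈ S, G.Adj u a := hSdom a haS
        rw [hf]; simp only [if_neg haS, dif_pos h]
        exact ⟨h.choose_spec.1, Or.inr h.choose_spec.2⟩
    have hmaps : ∀ a ∈ P, f a ∈ S := fun a _ => (hfspec a).1
    have hfib : ∀ u ∈ S, (P.filter fun a => f a = u).card ≤ 2 := by
      intro u _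
      by_contra hcon
      push_neg at hcon
      obtain ⟨a, b, c, ha, hb, hc, hab, hac, hbc⟩ := Finset.two_lt_card_iff.mp hcon
      rw [mem_filter] at ha hb hc
      have hNa : a = u ∨ G.Adj u a := by
        rcases (hfspec a).2 with h | h
        · exact Or.inl (h.trans ha.2)
        · exact Or.inr (ha.2 ▸ h)
      have hNb : b = u ∨ G.Adj u b := by
        rcases (hfspec b).2 with h | h
        · exact Or.inl (h.trans hb.2)
        · exact Or.inr (hb.2 ▸ h)
      have hNc : c = u ∨ G.Adj u c := by
        rcases (hfspec c).2 with h | h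
        · exact Or.inl (h.trans hc.2)
        · exact Or.inr (hc.2 ▸ h)
      exact sim_three μ ε hε G hG hab hac hbc
        (hPind (by exact_mod_cast ha.1) (by exact_mod_cast hb.1) hab)
        (hPind (by exact_mod_cast ha.1) (by exact_mod_cast hc.1) hac)
        (hPind (by exact_mod_cast hb.1) (by exact_mod_cast hc.1) hbc)
        hNa hNb hNc
    calc n = P.card := hPcard.symm
      _ ≤ 2 * S.card := Finset.card_le_mul_card_image_of_maps_to hmaps 2 hfib
      _ = 2 * sInf A := by rw [hScard]
end

section
/- Let T ≥ 2 be an integer and p ∈ (0,1), and set b = 1/(1 − p). If b < T and k = ⌈5·log_b T⌉, then C(T, k)·(1 − p)^{k(k−1)/2} ≤ T^{−5}, where C(T,k) is the binomial coefficient. Moreover, if 1 − p ≤ 1/T, then C(T, 5)·(1 − p)^{10} ≤ T^{−5}. -/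
/-- The counting estimate for independent sets in a random graph: for an integer
`T ≥ 2`, `p ∈ (0,1)` and `b = 1/(1-p)`, if `b < T` and `k = ⌈5·log_b T⌉` then
`C(T,k)·(1-p)^{k(k-1)/2} ≤ T^{-5}`; moreover, if `1 - p ≤ 1/T` then
`C(T,5)·(1-p)^{10} ≤ T^{-5}`. -/
theorem random_graph_indep_counting (T : ℕ) (hT : 2 ≤ T) (p : ℝ)
    (hp : p ∈ Set.Ioo (0 : ℝ) 1) (b : ℝ) (hb : b = 1 / (1 - p)) :
    ((b < T → ∀ k : ℕ, k = ⌈5 * (Real.log T / Real.log b)⌉₊ →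
      (T.choose k : ℝ) * (1 - p) ^ (k * (k - 1) / 2) ≤ (T : ℝ) ^ (-5 : ℤ))) ∧
    (1 - p ≤ 1 / T →
      (T.choose 5 : ℝ) * (1 - p) ^ 10 ≤ (T : ℝ) ^ (-5 : ℤ)) := by
  obtain ⟨hp0, hp1⟩ := hp
  have hq0 : (0:ℝ) < 1 - p := by linarith
  have hq1 : 1 - p < 1 := by linarith
  have hb1 : 1 < b := by rw [hb]; rw [lt_div_iff₀ hq0]; linarith
  have hb0 : 0 < b := by linarith
  have hbinv : 1 - p = b⁻¹ := by rw [hb]; field_simp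
  have hT0 : (0:ℝ) < T := by positivity
  have hT1 : (1:ℝ) < T := by exact_mod_cast hT
  have hlogT : 0 < Real.log T := Real.log_pos hT1
  have hlogb : 0 < Real.log b := Real.log_pos hb1
  have hT5inv : ((T:ℝ))^(-5:ℤ) = ((T:ℝ)^(5:ℕ))⁻¹ := by
    rw [zpow_neg]; norm_cast
  constructor
  · intro hbT k hk
    set x : ℝ := 5 * (Real.log T / Real.log b) with hx
    have hlogblt : Real.log b < Real.log T := Real.log_lt_log hb0 hbT
    have hx5 : (5:ℝ) < x := by
      rw [hx]
      have : 1 < Real.log T / Real.log b := (one_lt_div hlogb).2 hlogblt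
      linarith
    have hk6 : 6 ≤ k := by
      rw [hk]
      have : (5:ℕ) < ⌈x⌉₊ := Nat.lt_ceil.2 (by exact_mod_cast hx5)
      omega
    have hkx : x ≤ (k:ℝ) := hk ▸ Nat.le_ceil x
    have hklogb : 5 * Real.log T ≤ (k:ℝ) * Real.log b := by
      have := mul_le_mul_of_nonneg_right hkx hlogb.le
      rw [hx] at this
      calc 5 * Real.log T = 5 * (Real.log T / Real.log b) * Real.log b := by
            field_simp
        _ ≤ (k:ℝ) * Real.log b := this
    set m : ℕ := k * (k - 1) / 2 with hm
    have hm2 : 2 * m = k * (k - 1) := by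
      rw [hm]; rw [Nat.mul_div_cancel']
      obtain ⟨j, hj⟩ : ∃ j, k = j + 1 := ⟨k - 1, by omega⟩
      subst hj
      simpa [Nat.mul_comm] using (Nat.even_mul_succ_self j).two_dvd
    have hmr : (m:ℝ) = (k:ℝ) * ((k:ℝ) - 1) / 2 := by
      have : ((2 * m : ℕ) : ℝ) = ((k * (k-1) : ℕ) : ℝ) := by rw [hm2]
      push_cast [Nat.cast_sub (by omega : 1 ≤ k)] at this
      linarith
    -- key: T^(k+5) ≤ b^m
    have hkey : (T:ℝ)^(k+5) ≤ b^m := by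
      rw [← Real.log_le_log_iff (by positivity) (by positivity),
        Real.log_pow, Real.log_pow]
      have h1 : ((k:ℝ) + 5) * Real.log T ≤ ((k:ℝ) - 1) / 2 * ((k:ℝ) * Real.log b) := by
        have hk6' : (6:ℝ) ≤ (k:ℝ) := by exact_mod_cast hk6
        have h2 : ((k:ℝ) + 5) * Real.log T ≤ ((k:ℝ) - 1) / 2 * (5 * Real.log T) := by
          nlinarith [hlogT]
        have h3 : ((k:ℝ) - 1) / 2 * (5 * Real.log T) ≤ ((k:ℝ) - 1) / 2 * ((k:ℝ) * Real.log b) := by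
          apply mul_le_mul_of_nonneg_left hklogb; linarith
        linarith
      push_cast
      calc ((k:ℝ) + 5) * Real.log T ≤ ((k:ℝ) - 1) / 2 * ((k:ℝ) * Real.log b) := h1
        _ = (m:ℝ) * Real.log b := by rw [hmr]; ring
    have hchoose : (T.choose k : ℝ) ≤ (T:ℝ)^k := by
      exact_mod_cast Nat.choose_le_pow T k
    have hstep : (T.choose k : ℝ) * (1 - p) ^ m ≤ (T:ℝ)^k * (1-p)^m := by
      apply mul_le_mul_of_nonneg_right hchoose (by positivity)
    refine hstep.trans ?_
    rw [hbinv, hT5inv, inv_pow, ← div_eq_mul_inv, div_le_iff₀ (by positivity)]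
    calc (T:ℝ)^k = (T:ℝ)^(k+5) * ((T:ℝ)^5)⁻¹ := by
          rw [pow_add]; field_simp
      _ ≤ b^m * ((T:ℝ)^5)⁻¹ := by
          exact mul_le_mul_of_nonneg_right hkey (by positivity)
      _ = ((T:ℝ)^5)⁻¹ * b^m := mul_comm _ _
  · intro hq
    have h1 : (T.choose 5 : ℝ) ≤ (T:ℝ)^5 := by exact_mod_cast Nat.choose_le_pow T 5
    have h2 : (1 - p)^10 ≤ (1/(T:ℝ))^10 := by
      apply pow_le_pow_left₀ hq0.le hq
    calc (T.choose 5 : ℝ) * (1 - p) ^ 10 ≤ (T:ℝ)^5 * (1/(T:ℝ))^10 := by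
          apply mul_le_mul h1 h2 (by positivity) (by positivity)
      _ = (T:ℝ)^(-5:ℤ) := by
          rw [hT5inv]; field_simp
end
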